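/- Let F be a field with char F ≠ 2 and let n ∈ ℕ. For every g ∈ Sp_{2n}(F) with g² = 1 there exists a unique pair of natural numbers (p, q) with p + q = n such that g is conjugate by an element of Sp_{2n}(F) to the block matrix fromBlocks D 0 0 D, where D is the n×n diagonal matrix whose i-th diagonal entry (0-indexed) is 1 if i < p and −1 otherwise. (That is, every involution in Sp_{2n}(F) is Sp_{2n}(F)-conjugate to such a standard involution for exactly one pair (p,q).) -/

import Mathlib

set_option maxHeartbeats 1000000

open Module Submodule Matrix

/-- The `n × n` diagonal matrix with `p` ones followed by `n - p` minus-ones. -/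
def stdDiag (F : Type*) [Field F] (n p : ℕ) : Matrix (Fin n) (Fin n) F :=
  Matrix.diagonal fun i => if (i : ℕ) < p then 1 else -1

/-- The standard involution of `Sp_{2n}(F)` attached to a decomposition `n = p + q`. -/
def stdInvolution (F : Type*) [Field F] (n p : ℕ) :
    Matrix (Fin n ⊕ Fin n) (Fin n ⊕ Fin n) F :=
  Matrix.fromBlocks (stdDiag F n p) 0 0 (stdDiag F n p)


open Module Submodule

universe u v

variable {K : Type v} [Field K]

lemma symp_aux (d : ℕ) :
    ∀ (V : Type u) [AddCommGroup V], ∀ [Module K V] [FiniteDimensional K V],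
    ∀ (B : LinearMap.BilinForm K V), B.IsAlt → B.Nondegenerate →
    finrank K V ≤ d →
    ∃ (m : ℕ) (e f : Fin m → V),
      Submodule.span K (Set.range e ∪ Set.range f) = ⊤ ∧
      (∀ i j, B (e i) (e j) = 0) ∧
      (∀ i j, B (f i) (f j) = 0) ∧
      (∀ i j, B (e i) (f j) = if i = j then 1 else 0) := by
  induction d with
  | zero =>
    intro V _ _ _ B halt hnd hd
    have h0 : finrank K V = 0 := Nat.le_zero.mp hd
    have : Subsingleton V := finrank_zero_iff.mp h0
    refine ⟨0, finZeroElim, finZeroElim, Subsingleton.elim _ _, ?_, ?_, ?_⟩ <;>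
      exact fun i => i.elim0
  | succ d IH =>
    intro V _ _ _ B halt hnd hd
    by_cases hle : finrank K V ≤ d
    · exact IH V B halt hnd hle
    -- nontrivial case
    have hpos : 0 < finrank K V := by omega
    have : Nontrivial V := finrank_pos_iff.mp hpos
    obtain ⟨x, hx⟩ := exists_ne (0 : V)
    have hy : ∃ y, B x y ≠ 0 := by
      by_contra h
      push_neg at h
      exact hx (hnd.1 x h)
    obtain ⟨y, hy⟩ := hy
    set y' : V := (B x y)⁻¹ • y with hy'def
    have hxy' : B x y' = 1 := by
      rw [hy'def, _root_.map_smul, smul_eq_mul, inv_mul_cancel₀ hy]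
    have hy'x : B y' x = -1 := by
      rw [← LinearMap.IsAlt.neg halt, hxy']
    set W : Submodule K V := Submodule.span K ({x, y'} : Set V) with hWdef
    have hxW : x ∈ W := subset_span (by simp)
    have hy'W : y' ∈ W := subset_span (by simp)
    have hrestrict : (B.restrict W).Nondegenerate := by
      refine (LinearMap.IsRefl.nondegenerate_iff_separatingLeft (B := B.restrict W) (fun a b h => halt.isRefl a b h)).mpr fun z hz => ?_
      obtain ⟨a, b, hab⟩ := mem_span_pair.mp z.2
      have h1 : B (z : V) x = 0 := hz ⟨x, hxW⟩
      have h2 : B (z : V) y' = 0 := hz ⟨y', hy'W⟩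
      rw [← hab] at h1 h2
      simp only [map_add, _root_.map_smul, LinearMap.add_apply, LinearMap.smul_apply,
        halt.self_eq_zero, hy'x, hxy', smul_eq_mul, mul_zero, mul_one, mul_neg,
        zero_add, add_zero] at h1 h2
      have hb : b = 0 := neg_eq_zero.mp h1
      have ha : a = 0 := h2
      have : (z : V) = 0 := by rw [← hab, ha, hb]; simp
      exact Subtype.ext this
    have hcompl : IsCompl W (B.orthogonal W) :=
      LinearMap.BilinForm.isCompl_orthogonal_of_restrict_nondegenerate halt.isRefl hrestrict
    set O : Submodule K V := B.orthogonal W with hOdef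
    have horthW : ∀ w ∈ W, ∀ z ∈ O, B w z = 0 := fun w hw z hz => hz w hw
    have horthW' : ∀ z ∈ O, ∀ w ∈ W, B z w = 0 := fun z hz w hw =>
      halt.isRefl w z (horthW w hw z hz)
    have hrestrict' : (B.restrict O).Nondegenerate := by
      refine (LinearMap.IsRefl.nondegenerate_iff_separatingLeft (B := B.restrict O) (fun a b h => halt.isRefl a b h)).mpr fun z hz => ?_
      have hzO := z.2
      have : (z : V) = 0 := by
        apply hnd.1
        intro v
        have hv : v ∈ W ⊔ O := hcompl.codisjoint.eq_top ▸ Submodule.mem_top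
        obtain ⟨w, hw, o, ho, rfl⟩ := Submodule.mem_sup.mp hv
        rw [map_add]
        have h1 : B (z : V) w = 0 := horthW' z hzO w hw
        have h2 : B (z : V) o = 0 := hz ⟨o, ho⟩
        rw [h1, h2, add_zero]
      exact Subtype.ext this
    have halt' : (B.restrict O).IsAlt := fun z => halt z
    have hWfr : 0 < finrank K W := by
      have : Nontrivial W := ⟨⟨x, hxW⟩, 0, by simp [hx]⟩
      exact finrank_pos
    have hOfr : finrank K O ≤ d := by
      have := Submodule.finrank_add_eq_of_isCompl hcompl
      have hV : finrank K V ≤ d + 1 := hd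
      omega
    obtain ⟨m, e', f', hspan', h1', h2', h3'⟩ := IH O (B.restrict O) halt' hrestrict' hOfr
    refine ⟨m + 1, Fin.cons x (fun i => (e' i : V)), Fin.cons y' (fun i => (f' i : V)),
      ?_, ?_, ?_, ?_⟩
    · -- spanning
      rw [eq_top_iff, ← hcompl.codisjoint.eq_top]
      apply sup_le
      · rw [hWdef, Submodule.span_le]
        rintro v (rfl | rfl)
        · exact subset_span (Or.inl ⟨0, Fin.cons_zero _ _⟩)
        · exact subset_span (Or.inr ⟨0, Fin.cons_zero _ _⟩)
      · intro z hz
        have : (⟨z, hz⟩ : O) ∈ Submodule.span K (Set.range e' ∪ Set.range f') := by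
          rw [hspan']; trivial
        have hmap := Submodule.mem_map_of_mem (f := O.subtype) this
        rw [Submodule.map_span] at hmap
        refine Submodule.span_mono ?_ hmap
        rintro _ ⟨w, (⟨i, rfl⟩ | ⟨i, rfl⟩), rfl⟩
        · exact Or.inl ⟨i.succ, by simp⟩
        · exact Or.inr ⟨i.succ, by simp⟩
    · -- e-e pairings
      intro i j
      refine Fin.cases ?_ ?_ i <;> [skip; intro i'] <;> refine Fin.cases ?_ ?_ j <;>
        try intro j'
      · simp [halt.self_eq_zero]
      · simpa using horthW x hxW _ (e' _).2
      · simpa using horthW' _ (e' i').2 x hxW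
      · simpa using h1' i' _
    · intro i j
      refine Fin.cases ?_ ?_ i <;> [skip; intro i'] <;> refine Fin.cases ?_ ?_ j <;>
        try intro j'
      · simp [halt.self_eq_zero]
      · simpa using horthW y' hy'W _ (f' _).2
      · simpa using horthW' _ (f' i').2 y' hy'W
      · simpa using h2' i' _
    · intro i j
      refine Fin.cases ?_ ?_ i <;> [skip; intro i'] <;> refine Fin.cases ?_ ?_ j <;>
        try intro j'
      · simpa using hxy'
      · have := horthW x hxW _ (f' j').2
        simpa [Fin.succ_ne_zero, (Fin.succ_ne_zero j').symm] using this
      · have := horthW' _ (e' i').2 y' hy'W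
        simpa [(Fin.succ_ne_zero i').symm, Fin.succ_ne_zero] using this
      · have := h3' i' j'
        simpa [Fin.succ_inj] using this

lemma exists_symp_families (V : Type u) [AddCommGroup V] [Module K V] [FiniteDimensional K V]
    (B : LinearMap.BilinForm K V) (halt : B.IsAlt) (hnd : B.Nondegenerate) :
    ∃ (m : ℕ) (e f : Fin m → V),
      finrank K V = m + m ∧
      (∀ i j, B (e i) (e j) = 0) ∧
      (∀ i j, B (f i) (f j) = 0) ∧
      (∀ i j, B (e i) (f j) = if i = j then 1 else 0) := by
  obtain ⟨m, e, f, hspan, h1, h2, h3⟩ := symp_aux (finrank K V) V B halt hnd le_rfl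
  have hli : LinearIndependent K (Sum.elim e f) := by
    rw [Fintype.linearIndependent_iff]
    intro c hc
    have key : ∀ v : V, (∑ k : Fin m ⊕ Fin m, c k * B (Sum.elim e f k) v) = 0 := by
      intro v
      have h0 : B (∑ k : Fin m ⊕ Fin m, c k • Sum.elim e f k) v = 0 := by rw [hc]; simp
      rw [map_sum] at h0
      simpa [LinearMap.sum_apply, _root_.map_smul, smul_eq_mul] using h0
    intro k
    match k with
    | Sum.inl i =>
      have := key (f i)
      rw [Fintype.sum_sum_type] at this
      simpa [h3, h2, mul_ite, Finset.sum_ite_eq'] using this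
    | Sum.inr i =>
      have := key (e i)
      rw [Fintype.sum_sum_type] at this
      have hfe : ∀ b, B (f b) (e i) = -(if i = b then 1 else 0) := by
        intro b
        rw [← LinearMap.IsAlt.neg halt, h3]
      simpa [h1, hfe, mul_ite, Finset.sum_ite_eq] using this
  let b : Basis (Fin m ⊕ Fin m) K V := Basis.mk hli (by rw [Set.Sum.elim_range, hspan])
  have hcard := finrank_eq_card_basis b
  refine ⟨m, e, f, ?_, h1, h2, h3⟩
  simpa [Fintype.card_sum] using hcard

lemma exists_rep (F : Type*) [Field F] (hchar : ringChar F ≠ 2) (n : ℕ)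
    (g : Matrix (Fin n ⊕ Fin n) (Fin n ⊕ Fin n) F)
    (hg : g ∈ Matrix.symplecticGroup (Fin n) F) (hinv : g ^ 2 = 1) :
    ∃ p q : ℕ, p + q = n ∧ ∃ s ∈ Matrix.symplecticGroup (Fin n) F,
      s * g * s⁻¹ = stdInvolution F n p := by
  classical
  have h2 : (2 : F) ≠ 0 := Ring.two_ne_zero hchar
  have hgJ : gᵀ * Matrix.J (Fin n) F * g = Matrix.J (Fin n) F := SymplecticGroup.mem_iff'.mp hg
  have hgg : g * g = 1 := by rw [← sq]; exact hinv
  set B : LinearMap.BilinForm F ((Fin n ⊕ Fin n) → F) :=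
    LinearMap.mk₂ F (fun x y => x ⬝ᵥ (Matrix.J (Fin n) F *ᵥ y))
      (fun x x' y => by rw [add_dotProduct])
      (fun c x y => by rw [smul_dotProduct])
      (fun x y y' => by rw [mulVec_add, dotProduct_add])
      (fun c x y => by rw [mulVec_smul, dotProduct_smul]) with hB
  have hBapp : ∀ x y, B x y = x ⬝ᵥ (Matrix.J (Fin n) F *ᵥ y) := fun x y => rfl
  have hvmJ : ∀ x, x ᵥ* Matrix.J (Fin n) F = -(Matrix.J (Fin n) F *ᵥ x) := by
    intro x
    have hJ : Matrix.J (Fin n) F = (-(Matrix.J (Fin n) F))ᵀ := by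
      rw [transpose_neg, J_transpose, neg_neg]
    conv_lhs => rw [hJ]
    rw [vecMul_transpose, neg_mulVec]
  have halt : B.IsAlt := by
    intro x
    have key : x ⬝ᵥ (Matrix.J (Fin n) F *ᵥ x) = -(x ⬝ᵥ (Matrix.J (Fin n) F *ᵥ x)) := by
      conv_lhs => rw [dotProduct_mulVec, hvmJ, neg_dotProduct, dotProduct_comm]
    have h' : (2 : F) * (x ⬝ᵥ (Matrix.J (Fin n) F *ᵥ x)) = 0 := by
      rw [two_mul]
      nth_rewrite 1 [key]
      ring
    rw [hBapp]
    exact (mul_eq_zero.mp h').resolve_left h2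
  have hnd : B.Nondegenerate := by
    refine (LinearMap.IsRefl.nondegenerate_iff_separatingLeft halt.isRefl).mpr fun x hx => ?_
    have hv : x ᵥ* Matrix.J (Fin n) F = 0 := by
      ext a
      have := hx (Pi.single a 1)
      rw [hBapp, dotProduct_mulVec] at this
      simpa [dotProduct_single] using this
    have h0 : x ᵥ* (Matrix.J (Fin n) F * Matrix.J (Fin n) F) = 0 := by
      rw [← vecMul_vecMul, hv, zero_vecMul]
    rw [J_squared] at h0
    simpa [vecMul_neg, vecMul_one, neg_eq_zero] using h0
  have hinvar : ∀ x y : (Fin n ⊕ Fin n) → F, B (g *ᵥ x) (g *ᵥ y) = B x y := by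
    intro x y
    rw [hBapp, hBapp, mulVec_mulVec, dotProduct_mulVec,
      show g *ᵥ x = x ᵥ* gᵀ from (vecMul_transpose g x).symm,
      vecMul_vecMul, ← Matrix.mul_assoc, hgJ, ← dotProduct_mulVec]
  have hgl2 : ∀ x, g *ᵥ (g *ᵥ x) = x := by
    intro x; rw [mulVec_mulVec, hgg, one_mulVec]
  set Vp := LinearMap.ker (g.mulVecLin - LinearMap.id) with hVp
  set Vm := LinearMap.ker (g.mulVecLin + LinearMap.id) with hVm
  have hVpmem : ∀ x, x ∈ Vp ↔ g *ᵥ x = x := by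
    intro x
    rw [hVp, LinearMap.mem_ker, LinearMap.sub_apply, LinearMap.id_apply,
      Matrix.mulVecLin_apply, sub_eq_zero]
  have hVmmem : ∀ x, x ∈ Vm ↔ g *ᵥ x = -x := by
    intro x
    rw [hVm, LinearMap.mem_ker, LinearMap.add_apply, LinearMap.id_apply,
      Matrix.mulVecLin_apply, add_eq_zero_iff_eq_neg]
  have hcompl : IsCompl Vp Vm := by
    constructor
    · rw [Submodule.disjoint_def]
      intro x hxp hxm
      rw [hVpmem] at hxp
      rw [hVmmem] at hxm
      have hxx : (2:F) • x = 0 := by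
        rw [two_smul]
        nth_rewrite 1 [← hxp]
        rw [hxm]
        abel
      exact (smul_eq_zero.mp hxx).resolve_left h2
    · rw [codisjoint_iff, eq_top_iff]
      intro x _
      refine Submodule.mem_sup.mpr ⟨(2⁻¹:F) • (x + g *ᵥ x), ?_, (2⁻¹:F) • (x - g *ᵥ x), ?_, ?_⟩
      · rw [hVpmem, mulVec_smul, mulVec_add, hgl2, add_comm]
      · rw [hVmmem, mulVec_smul, mulVec_sub, hgl2, ← smul_neg, neg_sub]
      · rw [← smul_add]
        have hsum : (x + g *ᵥ x) + (x - g *ᵥ x) = (2:F) • x := by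
          rw [two_smul]; abel
        rw [hsum, smul_smul, inv_mul_cancel₀ h2, one_smul]
  have horth : ∀ x ∈ Vp, ∀ y ∈ Vm, B x y = 0 := by
    intro x hx y hy
    have hxy := hinvar x y
    rw [(hVpmem x).mp hx, (hVmmem y).mp hy, map_neg] at hxy
    have h' : (2:F) * B x y = 0 := by
      rw [two_mul]
      nth_rewrite 1 [← hxy]
      ring
    exact (mul_eq_zero.mp h').resolve_left h2
  have horth' : ∀ y ∈ Vm, ∀ x ∈ Vp, B y x = 0 := fun y hy x hx =>
    halt.isRefl x y (horth x hx y hy)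
  have hndp : (B.restrict Vp).Nondegenerate := by
    refine (LinearMap.IsRefl.nondegenerate_iff_separatingLeft (B := B.restrict Vp) (fun a b h => halt.isRefl a b h)).mpr fun z hz => ?_
    refine Subtype.ext (hnd.1 z ?_)
    intro v
    have hv : v ∈ Vp ⊔ Vm := hcompl.codisjoint.eq_top ▸ Submodule.mem_top
    obtain ⟨a, ha, b, hb, rfl⟩ := Submodule.mem_sup.mp hv
    rw [map_add]
    have h1 : B (z : (Fin n ⊕ Fin n) → F) a = 0 := hz ⟨a, ha⟩
    have hb' : B (z : (Fin n ⊕ Fin n) → F) b = 0 := horth z z.2 b hb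
    rw [h1, hb', add_zero]
  have hndm : (B.restrict Vm).Nondegenerate := by
    refine (LinearMap.IsRefl.nondegenerate_iff_separatingLeft (B := B.restrict Vm) (fun a b h => halt.isRefl a b h)).mpr fun z hz => ?_
    refine Subtype.ext (hnd.1 z ?_)
    intro v
    have hv : v ∈ Vp ⊔ Vm := hcompl.codisjoint.eq_top ▸ Submodule.mem_top
    obtain ⟨a, ha, b, hb, rfl⟩ := Submodule.mem_sup.mp hv
    rw [map_add]
    have h1 : B (z : (Fin n ⊕ Fin n) → F) a = 0 := horth' z z.2 a ha
    have hb' : B (z : (Fin n ⊕ Fin n) → F) b = 0 := hz ⟨b, hb⟩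
    rw [h1, hb', add_zero]
  obtain ⟨p, ep, fp, hfrp, hp1, hp2, hp3⟩ :=
    exists_symp_families Vp (B.restrict Vp) (fun z => halt z) hndp
  obtain ⟨q, em, fm, hfrq, hq1, hq2, hq3⟩ :=
    exists_symp_families Vm (B.restrict Vm) (fun z => halt z) hndm
  have htotal : finrank F Vp + finrank F Vm = n + n := by
    rw [Submodule.finrank_add_eq_of_isCompl hcompl]
    simp [Module.finrank_pi]
  have hpq : p + q = n := by omega
  -- coerced pairing facts
  have hres : ∀ (W : Submodule F ((Fin n ⊕ Fin n) → F)) (u w : W),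
      B.restrict W u w = B (u : (Fin n ⊕ Fin n) → F) w := fun W u w => rfl
  simp only [hres] at hp1 hp2 hp3 hq1 hq2 hq3
  have hp3' : ∀ a b, B (fp a : (Fin n ⊕ Fin n) → F) (ep b) = if b = a then -1 else 0 := by
    intro a b
    rw [← LinearMap.IsAlt.neg halt, hp3]
    split_ifs <;> simp
  have hq3' : ∀ a b, B (fm a : (Fin n ⊕ Fin n) → F) (em b) = if b = a then -1 else 0 := by
    intro a b
    rw [← LinearMap.IsAlt.neg halt, hq3]
    split_ifs <;> simp
  -- the new basis vectors
  have hqbound : ∀ i : Fin n, ¬ (i:ℕ) < p → (i:ℕ) - p < q := fun i h => by omega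
  set vl : Fin n → ((Fin n ⊕ Fin n) → F) := fun i =>
    if h : (i:ℕ) < p then (fp ⟨i, h⟩ : (Fin n ⊕ Fin n) → F)
    else (fm ⟨(i:ℕ) - p, hqbound i h⟩ : (Fin n ⊕ Fin n) → F) with hvl
  set vr : Fin n → ((Fin n ⊕ Fin n) → F) := fun i =>
    if h : (i:ℕ) < p then (ep ⟨i, h⟩ : (Fin n ⊕ Fin n) → F)
    else (em ⟨(i:ℕ) - p, hqbound i h⟩ : (Fin n ⊕ Fin n) → F) with hvr
  set vec : (Fin n ⊕ Fin n) → ((Fin n ⊕ Fin n) → F) := Sum.elim vl vr with hvec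
  set dvec : Fin n → F := fun i => if (i:ℕ) < p then 1 else -1 with hdvec
  have hVpe : ∀ x : Vp, g *ᵥ (x : (Fin n ⊕ Fin n) → F) = x := fun x => (hVpmem x).mp x.2
  have hVme : ∀ x : Vm, g *ᵥ (x : (Fin n ⊕ Fin n) → F) = -x := fun x => (hVmmem x).mp x.2
  have heig : ∀ k, g *ᵥ vec k = (Sum.elim dvec dvec k) • vec k := by
    rintro (i | i) <;>
      simp only [hvec, Sum.elim_inl, Sum.elim_inr, hvl, hvr, hdvec] <;>
      split_ifs with h
    · rw [hVpe, one_smul]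
    · rw [hVme, neg_one_smul]
    · rw [hVpe, one_smul]
    · rw [hVme, neg_one_smul]
  have hBvec : ∀ a b, B (vec a) (vec b) = Matrix.J (Fin n) F a b := by
    have hJll : ∀ i j, Matrix.J (Fin n) F (Sum.inl i) (Sum.inl j) = 0 := by
      intro i j; simp [Matrix.J]
    have hJrr : ∀ i j, Matrix.J (Fin n) F (Sum.inr i) (Sum.inr j) = 0 := by
      intro i j; simp [Matrix.J]
    have hJlr : ∀ i j, Matrix.J (Fin n) F (Sum.inl i) (Sum.inr j) = if j = i then -1 else 0 := by
      intro i j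
      rw [Matrix.J, fromBlocks_apply₁₂, Matrix.neg_apply, Matrix.one_apply]
      by_cases h : i = j
      · subst h; simp
      · rw [if_neg h, if_neg (Ne.symm h), neg_zero]
    have hJrl : ∀ i j, Matrix.J (Fin n) F (Sum.inr i) (Sum.inl j) = if i = j then 1 else 0 := by
      intro i j
      rw [Matrix.J, fromBlocks_apply₂₁, Matrix.one_apply]
    have hPP : ∀ (u : Vp) (w : Vm), B (u : (Fin n ⊕ Fin n) → F) w = 0 :=
      fun u w => horth u u.2 w w.2
    have hMP : ∀ (u : Vm) (w : Vp), B (u : (Fin n ⊕ Fin n) → F) w = 0 :=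
      fun u w => horth' u u.2 w w.2
    rintro (i | i) (j | j)
    · -- (inl, inl)
      rw [hJll]
      simp only [hvec, Sum.elim_inl, hvl]
      by_cases hi : (i:ℕ) < p <;> by_cases hj : (j:ℕ) < p
      · rw [dif_pos hi, dif_pos hj]; exact hp2 _ _
      · rw [dif_pos hi, dif_neg hj]; exact hPP _ _
      · rw [dif_neg hi, dif_pos hj]; exact hMP _ _
      · rw [dif_neg hi, dif_neg hj]; exact hq2 _ _
    · -- (inl, inr)
      rw [hJlr]
      simp only [hvec, Sum.elim_inl, Sum.elim_inr, hvl, hvr]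
      by_cases hi : (i:ℕ) < p <;> by_cases hj : (j:ℕ) < p
      · rw [dif_pos hi, dif_pos hj, hp3']
        have hiff : ((⟨(j:ℕ), hj⟩ : Fin p) = ⟨(i:ℕ), hi⟩) ↔ (j = i) := by
          constructor
          · intro hc
            have hc2 : (j:ℕ) = (i:ℕ) := Fin.mk.inj hc
            exact Fin.ext hc2
          · intro hc; subst hc; rfl
        simp only [hiff]
      · rw [dif_pos hi, dif_neg hj, hPP]
        rw [if_neg (show ¬ j = i from fun hc => by subst hc; omega)]
      · rw [dif_neg hi, dif_pos hj, hMP]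
        rw [if_neg (show ¬ j = i from fun hc => by subst hc; omega)]
      · rw [dif_neg hi, dif_neg hj, hq3']
        have hiff : ((⟨(j:ℕ) - p, hqbound j hj⟩ : Fin q) = ⟨(i:ℕ) - p, hqbound i hi⟩) ↔
            (j = i) := by
          constructor
          · intro hc
            have hc2 : (j:ℕ) - p = (i:ℕ) - p := Fin.mk.inj hc
            exact Fin.ext (by omega)
          · intro hc; subst hc; rfl
        simp only [hiff]
    · -- (inr, inl)
      rw [hJrl]
      simp only [hvec, Sum.elim_inl, Sum.elim_inr, hvl, hvr]
      by_cases hi : (i:ℕ) < p <;> by_cases hj : (j:ℕ) < p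
      · rw [dif_pos hi, dif_pos hj, hp3]
        have hiff : ((⟨(i:ℕ), hi⟩ : Fin p) = ⟨(j:ℕ), hj⟩) ↔ (i = j) := by
          constructor
          · intro hc
            have hc2 : (i:ℕ) = (j:ℕ) := Fin.mk.inj hc
            exact Fin.ext hc2
          · intro hc; subst hc; rfl
        simp only [hiff]
      · rw [dif_pos hi, dif_neg hj, hPP]
        rw [if_neg (show ¬ i = j from fun hc => by subst hc; omega)]
      · rw [dif_neg hi, dif_pos hj, hMP]
        rw [if_neg (show ¬ i = j from fun hc => by subst hc; omega)]
      · rw [dif_neg hi, dif_neg hj, hq3]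
        have hiff : ((⟨(i:ℕ) - p, hqbound i hi⟩ : Fin q) = ⟨(j:ℕ) - p, hqbound j hj⟩) ↔
            (i = j) := by
          constructor
          · intro hc
            have hc2 : (i:ℕ) - p = (j:ℕ) - p := Fin.mk.inj hc
            exact Fin.ext (by omega)
          · intro hc; subst hc; rfl
        simp only [hiff]
    · -- (inr, inr)
      rw [hJrr]
      simp only [hvec, Sum.elim_inr, hvr]
      by_cases hi : (i:ℕ) < p <;> by_cases hj : (j:ℕ) < p
      · rw [dif_pos hi, dif_pos hj]; exact hp1 _ _
      · rw [dif_pos hi, dif_neg hj]; exact hPP _ _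
      · rw [dif_neg hi, dif_pos hj]; exact hMP _ _
      · rw [dif_neg hi, dif_neg hj]; exact hq1 _ _
  set M : Matrix (Fin n ⊕ Fin n) (Fin n ⊕ Fin n) F := Matrix.of (fun a k => vec k a) with hM
  have hentry : ∀ a b, (Mᵀ * Matrix.J (Fin n) F * M) a b = B (vec a) (vec b) := by
    intro a b
    rw [hBapp, Matrix.mul_assoc]
    simp only [Matrix.mul_apply, Matrix.transpose_apply, Matrix.of_apply, dotProduct,
      Matrix.mulVec, Finset.mul_sum, hM]
  have hMJ : Mᵀ * Matrix.J (Fin n) F * M = Matrix.J (Fin n) F := by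
    ext a b
    rw [hentry, hBvec]
  have hMmem : M ∈ Matrix.symplecticGroup (Fin n) F := SymplecticGroup.mem_iff'.mpr hMJ
  have hdetM : IsUnit M.det := SymplecticGroup.symplectic_det hMmem
  have hsmem : M⁻¹ ∈ Matrix.symplecticGroup (Fin n) F := by
    have hmem := ((⟨M, hMmem⟩ : Matrix.symplecticGroup (Fin n) F)⁻¹).2
    rwa [SymplecticGroup.coe_inv'] at hmem
  have hstd : stdInvolution F n p = Matrix.diagonal (Sum.elim dvec dvec) := by
    rw [stdInvolution, stdDiag, ← Matrix.fromBlocks_diagonal]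
  have hgM : g * M = M * stdInvolution F n p := by
    ext a k
    rw [hstd, Matrix.mul_diagonal]
    have hcol : (g * M) a k = (g *ᵥ vec k) a := rfl
    rw [hcol, heig]
    have hMak : M a k = vec k a := rfl
    rw [Pi.smul_apply, smul_eq_mul, hMak, mul_comm]
  refine ⟨p, q, hpq, M⁻¹, hsmem, ?_⟩
  rw [Matrix.nonsing_inv_nonsing_inv M hdetM, Matrix.mul_assoc, hgM, ← Matrix.mul_assoc,
    Matrix.nonsing_inv_mul M hdetM, Matrix.one_mul]

lemma rank_of_rep (F : Type*) [Field F] (hchar : ringChar F ≠ 2) (n p q : ℕ)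
    (hpq : p + q = n) (g : Matrix (Fin n ⊕ Fin n) (Fin n ⊕ Fin n) F)
    (s : Matrix (Fin n ⊕ Fin n) (Fin n ⊕ Fin n) F)
    (hs : s ∈ Matrix.symplecticGroup (Fin n) F)
    (hconj : s * g * s⁻¹ = stdInvolution F n p) :
    (g - 1).rank = q + q := by
  classical
  have h2 : (2 : F) ≠ 0 := Ring.two_ne_zero hchar
  have hdet : IsUnit s.det := SymplecticGroup.symplectic_det hs
  have h1 : s * (g - 1) * s⁻¹ = stdInvolution F n p - 1 := by
    rw [Matrix.mul_sub, Matrix.mul_one, Matrix.sub_mul, hconj, Matrix.mul_nonsing_inv s hdet]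
  have hrank : (stdInvolution F n p - 1).rank = (g - 1).rank := by
    rw [← h1, Matrix.rank_mul_eq_left_of_isUnit_det _ _ (s.isUnit_nonsing_inv_det hdet),
      Matrix.rank_mul_eq_right_of_isUnit_det _ _ hdet]
  set w : Fin n → F := fun i => (if (i:ℕ) < p then 1 else -1) - 1 with hw
  have hdiag : stdInvolution F n p - 1 = Matrix.diagonal (Sum.elim w w) := by
    rw [stdInvolution, stdDiag, Matrix.fromBlocks_diagonal, ← Matrix.diagonal_one,
      Matrix.diagonal_sub]
    exact congrArg Matrix.diagonal (funext fun k => by cases k <;> simp [hw])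
  have hm2 : (-2 : F) ≠ 0 := by simpa [neg_eq_zero] using h2
  have hwv : ∀ i : Fin n, w i = if (i:ℕ) < p then 0 else -2 := by
    intro i; rw [hw]; dsimp only; split_ifs <;> ring
  have hwne : ∀ i : Fin n, w i ≠ 0 ↔ ¬ (i:ℕ) < p := by
    intro i
    rw [hwv]
    split_ifs with h <;> simp [h, hm2]
  have hcard1 : Fintype.card {i : Fin n // (i:ℕ) < p} = p := by
    have e : {i : Fin n // (i:ℕ) < p} ≃ Fin p :=
      { toFun := fun x => ⟨x.1, x.2⟩
        invFun := fun j => ⟨⟨j.1, by omega⟩, j.2⟩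
        left_inv := fun x => by ext; rfl
        right_inv := fun j => by ext; rfl }
    rw [Fintype.card_congr e, Fintype.card_fin]
  have hcard : Fintype.card {i : Fin n // w i ≠ 0} = q := by
    rw [Fintype.card_congr (Equiv.subtypeEquivRight hwne), Fintype.card_subtype_compl,
      hcard1, Fintype.card_fin]
    omega
  rw [← hrank, hdiag, Matrix.rank_diagonal]
  rw [Fintype.card_congr (Equiv.subtypeSum (p := fun k => Sum.elim w w k ≠ 0))]
  rw [Fintype.card_sum]
  have hL : Fintype.card {a : Fin n // Sum.elim w w (Sum.inl a) ≠ 0} = q := by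
    rw [← hcard]; congr 1
  have hR : Fintype.card {a : Fin n // Sum.elim w w (Sum.inr a) ≠ 0} = q := by
    rw [← hcard]; congr 1
  rw [hL, hR]

/-- Every involution in `Sp_{2n}(F)` is `Sp_{2n}(F)`-conjugate to a standard involution
`fromBlocks D 0 0 D` for a unique pair `(p, q)` with `p + q = n`. -/
theorem involution_conj_stdInvolution_existsUnique
    (F : Type*) [Field F] (hchar : ringChar F ≠ 2) (n : ℕ)
    (g : Matrix (Fin n ⊕ Fin n) (Fin n ⊕ Fin n) F)
    (hg : g ∈ Matrix.symplecticGroup (Fin n) F) (hinv : g ^ 2 = 1) :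
    ∃! pq : ℕ × ℕ, pq.1 + pq.2 = n ∧
      ∃ s ∈ Matrix.symplecticGroup (Fin n) F,
        s * g * s⁻¹ = stdInvolution F n pq.1 := by
  obtain ⟨p, q, hpq, s, hs, hconj⟩ := exists_rep F hchar n g hg hinv
  refine ⟨(p, q), ⟨hpq, s, hs, hconj⟩, ?_⟩
  rintro ⟨p', q'⟩ ⟨hpq', s', hs', hconj'⟩
  have h1 := rank_of_rep F hchar n p q hpq g s hs hconj
  have h2 := rank_of_rep F hchar n p' q' hpq' g s' hs' hconj'
  have hq : q' = q := by omega
  have hp : p' = p := by omega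
  simp [hp, hq]
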